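/- arXiv:1606.05460 — 3 statements merged into one kernel-verified Lean document; each statement's English description precedes it below -/
import Mathlib

section
/- Generalization of Entry 1.4.9: Let q and t be complex numbers with |q| < 1, |q^t| < 1 and |q^{t}| defined by the principal power, such that all denominators below are nonzero. Then ∑_{j=0}^∞ q^{j(j+1)/2} / [(q;q)_j · (q;q)_{tj}] = [(−q;q)_∞ / (q;q)_∞] · ∑_{k=0}^∞ (−1)^k q^{k(k+1)/2} / [(q;q)_k · (−q;q)_{tk}]. -/
open Complex

/-- Finite q-Pochhammer symbol `(A;Q)_k = ∏_{r=0}^{k-1} (1 - A Q^r)`. -/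
noncomputable def qp (A Q : ℂ) (k : ℕ) : ℂ := ∏ r ∈ Finset.range k, (1 - A * Q ^ r)

/-- Infinite q-Pochhammer symbol `(A;Q)_∞ = ∏_{r=0}^{∞} (1 - A Q^r)`. -/
noncomputable def qpInf (A Q : ℂ) : ℂ := ∏' r : ℕ, (1 - A * Q ^ r)

/-- q-Pochhammer symbol with (possibly non-integer) index:
`(A;Q)_{c k} := (A;Q)_∞ / (A R^k;Q)_∞` where `R = Q^c`. -/
noncomputable def qpc (A Q R : ℂ) (k : ℕ) : ℂ := qpInf A Q / qpInf (A * R ^ k) Q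

/-- q-Pochhammer symbol with shifted (possibly non-integer) index:
`(A;Q)_{c k + 1} := (A;Q)_∞ / (A Q R^k;Q)_∞` where `R = Q^c`. -/
noncomputable def qpc1 (A Q R : ℂ) (k : ℕ) : ℂ := qpInf A Q / qpInf (A * Q * R ^ k) Q

open Filter Finset

lemma summable_geo (A q : ℂ) (hq : ‖q‖ < 1) :
    Summable (fun r : ℕ => ‖A * q ^ r‖) := by
  simpa [norm_mul, norm_pow] using
    (summable_geometric_of_lt_one (norm_nonneg q) (by simpa using hq)).mul_left ‖A‖

lemma hasProdQP (A q : ℂ) (hq : ‖q‖ < 1) :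
    HasProd (fun r : ℕ => 1 - A * q ^ r) (qpInf A q) := by
  have hs := summable_geo A q hq
  -- choose N with ‖A * q^r‖ ≤ 1/2 for r ≥ N
  have h0 : Tendsto (fun r : ℕ => ‖A * q ^ r‖) atTop (nhds 0) := hs.tendsto_atTop_zero
  obtain ⟨N, hN⟩ := (h0.eventually (eventually_le_nhds (by norm_num : (0:ℝ) < 1/2))).exists_forall_of_atTop
  have hmul : Multipliable (fun r : ℕ => 1 - A * q ^ r) := by
    apply Multipliable.comp_nat_add (k := N)
    have hne : ∀ n : ℕ, (1 : ℂ) - A * q ^ (n + N) ≠ 0 := by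
      intro n
      have hb : ‖A * q ^ (n + N)‖ ≤ 1/2 := hN (n + N) (Nat.le_add_left _ _)
      intro h
      have : ‖A * q ^ (n + N)‖ = 1 := by
        have : A * q ^ (n + N) = 1 := by linear_combination -h
        simp [this]
      linarith
    have hlog : Summable (fun n : ℕ => Complex.log (1 - A * q ^ (n + N))) := by
      apply Summable.of_norm_bounded (g := fun n => (3/2) * ‖A * q ^ (n + N)‖)
      · exact ((summable_nat_add_iff N).2 hs).mul_left _
      · intro n
        have hb : ‖A * q ^ (n + N)‖ ≤ 1/2 := hN (n + N) (Nat.le_add_left _ _)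
        have := Complex.norm_log_one_add_half_le_self (z := -(A * q ^ (n + N))) (by simpa using hb)
        simpa [sub_eq_add_neg] using this
    exact Complex.multipliable_of_summable_log hlog
  exact hmul.hasProd

lemma tendsto_qp (A q : ℂ) (hq : ‖q‖ < 1) :
    Tendsto (fun n => qp A q n) atTop (nhds (qpInf A q)) :=
  (hasProdQP A q hq).tendsto_prod_nat

lemma tri_succ (k : ℕ) : (k+1) * k / 2 = k * (k-1) / 2 + k := by
  have h : (k+1) * k = k * (k-1) + 2 * k := by
    cases k with
    | zero => rfl
    | succ m => simp [Nat.succ_sub_one]; ring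
  rw [h, Nat.add_mul_div_left _ _ (by norm_num : 0 < 2)]

lemma qp_succ (A Q : ℂ) (n : ℕ) : qp A Q (n+1) = qp A Q n * (1 - A * Q ^ n) := by
  simp [qp, Finset.prod_range_succ]

lemma qp_norm_le (A q : ℂ) (hq : ‖q‖ < 1) (n : ℕ) :
    ‖qp A q n‖ ≤ Real.exp (∑' r : ℕ, ‖A * q ^ r‖) := by
  have hs : Summable (fun r : ℕ => ‖A * q ^ r‖) := by
    simpa [norm_mul, norm_pow] using
      (summable_geometric_of_lt_one (norm_nonneg q) (by simpa using hq)).mul_left ‖A‖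
  calc ‖qp A q n‖ ≤ ∏ r ∈ Finset.range n, ‖(1 : ℂ) - A * q ^ r‖ := norm_prod_le _ _
    _ ≤ ∏ r ∈ Finset.range n, Real.exp ‖A * q ^ r‖ := by
        apply Finset.prod_le_prod (fun i _ => norm_nonneg _)
        intro i _
        calc ‖(1:ℂ) - A * q ^ i‖ ≤ ‖(1:ℂ)‖ + ‖A * q ^ i‖ := norm_sub_le _ _
          _ = 1 + ‖A * q ^ i‖ := by simp
          _ ≤ Real.exp ‖A * q ^ i‖ := by
              simpa [add_comm] using Real.add_one_le_exp ‖A * q ^ i‖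
    _ = Real.exp (∑ r ∈ Finset.range n, ‖A * q ^ r‖) := by rw [Real.exp_sum]
    _ ≤ Real.exp (∑' r : ℕ, ‖A * q ^ r‖) := by
        apply Real.exp_le_exp.2
        exact Summable.sum_le_tsum _ (fun i _ => norm_nonneg _) hs

noncomputable def gb (q : ℂ) (n k : ℕ) : ℂ := qp q q n / (qp q q k * qp q q (n - k))

noncomputable def cf (q : ℂ) (n k : ℕ) : ℂ := (-1)^k * q^(k*(k-1)/2) * gb q n k

lemma gb_zero (q : ℂ) (h1 : ∀ j : ℕ, qp q q j ≠ 0) (n : ℕ) : gb q n 0 = 1 := by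
  simp only [gb, Nat.sub_zero, qp, Finset.range_zero, Finset.prod_empty, one_mul]
  exact div_self (h1 n)

lemma gb_diag (q : ℂ) (h1 : ∀ j : ℕ, qp q q j ≠ 0) (n : ℕ) : gb q n n = 1 := by
  simp only [gb, Nat.sub_self, qp, Finset.range_zero, Finset.prod_empty, mul_one]
  exact div_self (h1 n)

lemma pascal (q : ℂ) (h1 : ∀ j : ℕ, qp q q j ≠ 0) (k d : ℕ) :
    gb q (k+d+2) (k+1) = gb q (k+d+1) (k+1) + q^(d+1) * gb q (k+d+1) k := by
  have e1 : qp q q (k+d+2) = qp q q (k+d+1) * (1 - q * q^(k+d+1)) := qp_succ q q (k+d+1)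
  have e2 : qp q q (d+1) = qp q q d * (1 - q * q^d) := qp_succ q q d
  have e3 : qp q q (k+1) = qp q q k * (1 - q * q^k) := qp_succ q q k
  have s1 : (k+d+2) - (k+1) = d+1 := by omega
  have s2 : (k+d+1) - (k+1) = d := by omega
  have s3 : (k+d+1) - k = d+1 := by omega
  set D : ℂ := qp q q (k+1) * qp q q (d+1) with hD
  have hDne : D ≠ 0 := mul_ne_zero (h1 (k+1)) (h1 (d+1))
  have t1 : gb q (k+d+2) (k+1) = qp q q (k+d+1) * (1 - q * q^(k+d+1)) / D := by
    rw [gb, s1, e1]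
  have t2 : gb q (k+d+1) (k+1) = qp q q (k+d+1) * (1 - q * q^d) / D := by
    rw [gb, s2, hD, e2]
    rw [div_eq_div_iff (mul_ne_zero (h1 (k+1)) (h1 d))
      (mul_ne_zero (h1 (k+1)) (mul_ne_zero (h1 d) (by
        intro h
        exact h1 (d+1) (by rw [e2, h, mul_zero])))), ]
    ring
  have t3 : gb q (k+d+1) k = qp q q (k+d+1) * (1 - q * q^k) / D := by
    rw [gb, s3, hD]
    rw [div_eq_div_iff (mul_ne_zero (h1 k) (h1 (d+1))) (mul_ne_zero (h1 (k+1)) (h1 (d+1))), e3]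
    ring
  rw [t1, t2, t3, mul_div_assoc']
  rw [← add_div]
  congr 1
  ring

lemma cf_zero (q : ℂ) (h1 : ∀ j : ℕ, qp q q j ≠ 0) (n : ℕ) : cf q n 0 = 1 := by
  simp [cf, gb_zero q h1 n]

lemma cf_diag (q : ℂ) (h1 : ∀ j : ℕ, qp q q j ≠ 0) (n : ℕ) :
    cf q n n = (-1)^n * q^(n*(n-1)/2) := by
  simp [cf, gb_diag q h1 n]

lemma cf_rec (q : ℂ) (h1 : ∀ j : ℕ, qp q q j ≠ 0) (n k : ℕ) (hk : k < n) :
    cf q (n+1) (k+1) = cf q n (k+1) - q^n * cf q n k := by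
  obtain ⟨d, rfl⟩ : ∃ d, n = k + d + 1 := ⟨n - k - 1, by omega⟩
  have hp := pascal q h1 k d
  simp only [cf, Nat.add_sub_cancel]
  rw [hp]
  have he : (k+1) * k / 2 + (d + 1) = k * (k-1) / 2 + (k + d + 1) := by
    rw [tri_succ]; omega
  have : q ^ ((k+1) * k / 2) * q ^ (d+1) = q ^ (k*(k-1)/2) * q ^ (k+d+1) := by
    rw [← pow_add, ← pow_add, he]
  rw [mul_add]
  rw [pow_succ (-1 : ℂ) k]
  ring_nf
  have h2 : (k + k^2)/2 = k * (k-1)/2 + k := by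
    have e : k + k^2 = (k+1)*k := by ring
    rw [e, tri_succ]
  rw [h2, pow_add]
  ring

lemma cf_diag_rec (q : ℂ) (h1 : ∀ j : ℕ, qp q q j ≠ 0) (n : ℕ) :
    cf q (n+1) (n+1) = -(q^n * cf q n n) := by
  rw [cf_diag q h1, cf_diag q h1]
  have h2 : (n+1) * ((n+1) - 1) / 2 = n * (n-1) / 2 + n := by
    simpa using tri_succ n
  rw [h2, pow_add, pow_succ]
  ring

theorem qbinom (q : ℂ) (h1 : ∀ j : ℕ, qp q q j ≠ 0) (z : ℂ) (n : ℕ) :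
    qp z q n = ∑ k ∈ Finset.range (n+1), cf q n k * z^k := by
  induction n with
  | zero => simp [qp, cf_zero q h1]
  | succ n ih =>
    rw [qp_succ, ih]
    set S1 := ∑ k ∈ Finset.range n, cf q n (k+1) * z^(k+1) with hS1
    set S2 := ∑ k ∈ Finset.range n, cf q n k * z^(k+1) with hS2
    have hT1 : ∑ k ∈ Finset.range (n+1), cf q n k * z^k = S1 + 1 := by
      rw [Finset.sum_range_succ' _ n, cf_zero q h1]
      simp
      exact hS1.symm
    have lhs_eq : ∑ k ∈ Finset.range (n+2), cf q (n+1) k * z^k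
        = (S1 - q^n * S2) + (-(q^n * cf q n n)) * z^(n+1) + 1 := by
      rw [Finset.sum_range_succ' _ (n+1), Finset.sum_range_succ, cf_zero q h1]
      have hsum : ∑ k ∈ Finset.range n, cf q (n+1) (k+1) * z^(k+1)
          = S1 - q^n * S2 := by
        rw [hS1, hS2, Finset.mul_sum, ← Finset.sum_sub_distrib]
        apply Finset.sum_congr rfl
        intro k hk
        rw [cf_rec q h1 n k (Finset.mem_range.1 hk)]
        ring
      rw [hsum, cf_diag_rec q h1]
      simp
    have hzT1 : z * ∑ k ∈ Finset.range (n+1), cf q n k * z^k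
        = S2 + cf q n n * z^(n+1) := by
      rw [Finset.mul_sum]
      rw [show (∑ k ∈ Finset.range (n+1), z * (cf q n k * z^k))
          = ∑ k ∈ Finset.range (n+1), cf q n k * z^(k+1) from
        Finset.sum_congr rfl (fun k _ => by ring)]
      exact Finset.sum_range_succ _ n
    rw [lhs_eq]
    linear_combination hT1 - q^n * hzT1

lemma qp_lower (q : ℂ) (hq : ‖q‖ < 1) (h1 : ∀ j : ℕ, qp q q j ≠ 0)
    (h4 : qpInf q q ≠ 0) : ∃ δ : ℝ, 0 < δ ∧ ∀ n, δ ≤ ‖qp q q n‖ := by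
  have ht : Tendsto (fun n => ‖qp q q n‖) atTop (nhds ‖qpInf q q‖) :=
    (tendsto_qp q q hq).norm
  have hL : 0 < ‖qpInf q q‖ := norm_pos_iff.2 h4
  obtain ⟨N, hN⟩ := (ht.eventually (eventually_ge_nhds (by linarith : ‖qpInf q q‖/2 <
    ‖qpInf q q‖))).exists_forall_of_atTop
  set m := (Finset.range (N+1)).inf' (by simp) (fun n => ‖qp q q n‖) with hm
  have hmpos : 0 < m := by
    rw [hm]
    rw [Finset.lt_inf'_iff]
    intro i _
    exact norm_pos_iff.2 (h1 i)
  refine ⟨min m (‖qpInf q q‖/2), lt_min hmpos (by linarith), fun n => ?_⟩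
  rcases le_or_gt n N with h | h
  · exact le_trans (min_le_left _ _)
      (Finset.inf'_le _ (Finset.mem_range.2 (by omega)))
  · exact le_trans (min_le_right _ _) (hN n (by omega))

theorem euler (q : ℂ) (hq : ‖q‖ < 1) (h1 : ∀ j : ℕ, qp q q j ≠ 0)
    (h4 : qpInf q q ≠ 0) (z : ℂ) :
    qpInf z q = ∑' k : ℕ, ((-1)^k * q^(k*(k-1)/2) / qp q q k) * z^k := by
  obtain ⟨δ, hδ, hδle⟩ := qp_lower q hq h1 h4
  set C := Real.exp (∑' r : ℕ, ‖q * q^r‖) with hC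
  have hCpos : 0 < C := Real.exp_pos _
  set bound : ℕ → ℝ := fun k => C/(δ*δ) * (‖q‖^(k*(k-1)/2) * ‖z‖^k) with hbdef
  have hbnonneg : ∀ k, 0 ≤ bound k := fun k => by positivity
  have hqnorm : ‖q‖ < 1 := by simpa using hq
  -- summability of the bound
  have hbsum : Summable bound := by
    apply summable_of_ratio_norm_eventually_le (r := 1/2) (by norm_num)
    have htend0 : Tendsto (fun k : ℕ => ‖q‖^k * ‖z‖) atTop (nhds 0) := by
      simpa using (tendsto_pow_atTop_nhds_zero_of_lt_one (norm_nonneg q) hqnorm).mul_const ‖z‖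
    filter_upwards [htend0.eventually (eventually_le_nhds (by norm_num : (0:ℝ) < 1/2))] with k hk
    have hrec : bound (k+1) = bound k * (‖q‖^k * ‖z‖) := by
      simp only [hbdef]
      rw [Nat.add_sub_cancel, tri_succ, pow_add, pow_succ]
      ring
    rw [Real.norm_of_nonneg (hbnonneg _), Real.norm_of_nonneg (hbnonneg _), hrec]
    calc bound k * (‖q‖^k * ‖z‖) ≤ bound k * (1/2) :=
          mul_le_mul_of_nonneg_left hk (hbnonneg k)
      _ = 1/2 * bound k := by ring
  set F : ℕ → ℕ → ℂ := fun n k => if k ≤ n then cf q n k * z^k else 0 with hFdef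
  have hF : ∀ n, qp z q n = ∑' k, F n k := by
    intro n
    rw [tsum_eq_sum (s := Finset.range (n+1))
      (fun b hb => if_neg (by simp only [Finset.mem_range] at hb; omega))]
    rw [qbinom q h1 z n]
    exact Finset.sum_congr rfl fun k hk =>
      (if_pos (by simpa [Nat.lt_succ_iff] using Finset.mem_range.1 hk)).symm
  have htend : ∀ k, Tendsto (fun n => F n k) atTop
      (nhds (((-1)^k * q^(k*(k-1)/2) / qp q q k) * z^k)) := by
    intro k
    have hgb : Tendsto (fun n => gb q n k) atTop (nhds ((qp q q k)⁻¹)) := by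
      have hnum := tendsto_qp q q hq
      have hden : Tendsto (fun n => qp q q k * qp q q (n - k)) atTop
          (nhds (qp q q k * qpInf q q)) :=
        tendsto_const_nhds.mul (hnum.comp (tendsto_sub_atTop_nat k))
      have hmain := hnum.div hden (mul_ne_zero (h1 k) h4)
      have heq : qpInf q q / (qp q q k * qpInf q q) = (qp q q k)⁻¹ := by
        rw [mul_comm, ← div_div, div_self h4, one_div]
      rw [heq] at hmain
      exact hmain
    have hmain : Tendsto (fun n => cf q n k * z^k) atTop
        (nhds (((-1)^k * q^(k*(k-1)/2) / qp q q k) * z^k)) := by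
      have := (hgb.const_mul ((-1:ℂ)^k * q^(k*(k-1)/2))).mul_const (z^k)
      simpa [cf, div_eq_mul_inv, mul_assoc] using this
    apply hmain.congr'
    filter_upwards [eventually_ge_atTop k] with n hn
    exact (if_pos hn).symm
  have hb : ∀ n k, ‖F n k‖ ≤ bound k := by
    intro n k
    by_cases hkn : k ≤ n
    · have h1' : ‖F n k‖ = ‖gb q n k‖ * (‖q‖^(k*(k-1)/2) * ‖z‖^k) := by
        rw [hFdef]
        simp only [if_pos hkn, cf]
        rw [norm_mul, norm_mul, norm_mul, norm_pow, norm_pow, norm_pow]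
        simp [norm_neg]
        ring
      rw [h1']
      apply mul_le_mul_of_nonneg_right _ (by positivity)
      have hgbnorm : ‖gb q n k‖ = ‖qp q q n‖ / (‖qp q q k‖ * ‖qp q q (n-k)‖) := by
        rw [gb, norm_div, norm_mul]
      rw [hgbnorm]
      apply div_le_div₀ (le_of_lt hCpos) (qp_norm_le q q hq n) (by positivity)
      exact mul_le_mul (hδle k) (hδle (n-k)) (le_of_lt hδ) (norm_nonneg _)
    · rw [hFdef]
      simp only [if_neg hkn, norm_zero]
      exact hbnonneg k
  have hconv := tendsto_tsum_of_dominated_convergence hbsum htend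
    (Eventually.of_forall (fun n => fun k => hb n k))
  have hto : Tendsto (fun n => qp z q n) atTop
      (nhds (∑' k : ℕ, ((-1)^k * q^(k*(k-1)/2) / qp q q k) * z^k)) := by
    apply hconv.congr
    intro n
    exact (hF n).symm
  exact tendsto_nhds_unique (tendsto_qp z q hq) hto

lemma tri' (k : ℕ) : k * (k+1) / 2 = k * (k-1) / 2 + k := by
  rw [mul_comm]; exact tri_succ k

lemma eulerA (q : ℂ) (hq : ‖q‖ < 1) (h1 : ∀ j : ℕ, qp q q j ≠ 0)
    (h4 : qpInf q q ≠ 0) (w : ℂ) :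
    qpInf (q * w) q = ∑' k : ℕ, ((-1)^k * q^(k*(k+1)/2) / qp q q k) * w^k := by
  rw [euler q hq h1 h4 (q*w)]
  apply tsum_congr
  intro k
  rw [mul_pow, tri', pow_add]
  ring

lemma eulerB (q : ℂ) (hq : ‖q‖ < 1) (h1 : ∀ j : ℕ, qp q q j ≠ 0)
    (h4 : qpInf q q ≠ 0) (w : ℂ) :
    qpInf (-(q * w)) q = ∑' j : ℕ, (q^(j*(j+1)/2) / qp q q j) * w^j := by
  rw [euler q hq h1 h4 (-(q*w))]
  apply tsum_congr
  intro k
  rw [neg_pow (q*w) k, mul_pow, tri', pow_add]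
  have hsq : (-1:ℂ)^k * (-1:ℂ)^k = 1 := by rw [← mul_pow]; norm_num
  linear_combination (q^(k*(k-1)/2) * q^k * w^k / qp q q k) * hsq

/-- generalization of Entry 1.4.9. -/
theorem entry_1_4_9_general (q t : ℂ)
    (hq : ‖q‖ < 1) (hqt : ‖q ^ t‖ < 1)
    (h1 : ∀ j : ℕ, qp q q j ≠ 0)
    (h2 : ∀ j : ℕ, qpc q q (q ^ t) j ≠ 0)
    (h3 : ∀ j : ℕ, qpInf (q * (q ^ t) ^ j) q ≠ 0)
    (h4 : qpInf q q ≠ 0)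
    (h5 : ∀ k : ℕ, qpc (-q) q (q ^ t) k ≠ 0)
    (h6 : ∀ k : ℕ, qpInf (-q * (q ^ t) ^ k) q ≠ 0) :
    ∑' j : ℕ, q ^ (j * (j + 1) / 2) / (qp q q j * qpc q q (q ^ t) j)
    = (qpInf (-q) q / qpInf q q) *
      ∑' k : ℕ, (-1 : ℂ) ^ k * q ^ (k * (k + 1) / 2) /
        (qp q q k * qpc (-q) q (q ^ t) k) := by
  set R : ℂ := q ^ t with hR
  set P : ℂ := qpInf q q with hP
  set Pm : ℂ := qpInf (-q) q with hPm
  have hPmne : Pm ≠ 0 := by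
    have := h6 0
    simpa using this
  obtain ⟨δ, hδ, hδle⟩ := qp_lower q hq h1 h4
  have hRnorm : ‖R‖ ≤ 1 := le_of_lt (by simpa using hqt)
  have hqnorm : ‖q‖ < 1 := by simpa using hq
  -- the double-sum term
  set T : ℕ → ℕ → ℂ := fun j k =>
    (q^(j*(j+1)/2) / qp q q j) * (((-1:ℂ)^k * q^(k*(k+1)/2)) / qp q q k) * R^(j*k) with hT
  -- summability of the norm bound sequence
  have hgsum : Summable (fun j : ℕ => ‖q‖^(j*(j+1)/2) / δ) := by
    apply summable_of_ratio_norm_eventually_le (r := 1/2) (by norm_num)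
    have htend0 : Tendsto (fun j : ℕ => ‖q‖^(j+1)) atTop (nhds 0) :=
      (tendsto_pow_atTop_nhds_zero_of_lt_one (norm_nonneg q) hqnorm).comp
        (tendsto_add_atTop_nat 1)
    filter_upwards [htend0.eventually (eventually_le_nhds (by norm_num : (0:ℝ) < 1/2))]
      with j hj
    have hrec : ‖q‖^((j+1)*(j+2)/2) = ‖q‖^(j*(j+1)/2) * ‖q‖^(j+1) := by
      rw [← pow_add]
      congr 1
      rw [mul_comm (j+1) (j+2), tri_succ (j+1), Nat.add_sub_cancel, mul_comm (j+1) j]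
    have hnn : (0:ℝ) ≤ ‖q‖^(j*(j+1)/2) / δ := by positivity
    rw [Real.norm_of_nonneg (by positivity), Real.norm_of_nonneg hnn, hrec]
    calc ‖q‖^(j*(j+1)/2) * ‖q‖^(j+1) / δ = (‖q‖^(j*(j+1)/2)/δ) * ‖q‖^(j+1) := by ring
      _ ≤ (‖q‖^(j*(j+1)/2)/δ) * (1/2) := mul_le_mul_of_nonneg_left hj hnn
      _ = 1/2 * (‖q‖^(j*(j+1)/2)/δ) := by ring
  -- summability of T over ℕ × ℕ
  have hTsum : Summable (fun p : ℕ × ℕ => T p.1 p.2) := by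
    apply Summable.of_norm_bounded
      (g := fun p : ℕ × ℕ => (‖q‖^(p.1*(p.1+1)/2)/δ) * (‖q‖^(p.2*(p.2+1)/2)/δ))
      (hgsum.mul_of_nonneg hgsum (fun j => by positivity) (fun k => by positivity))
    rintro ⟨j, k⟩
    simp only [hT, norm_mul, norm_div, norm_pow, norm_neg, norm_one, one_pow, one_mul]
    have b1 : ‖q‖^(j*(j+1)/2) / ‖qp q q j‖ ≤ ‖q‖^(j*(j+1)/2) / δ :=
      div_le_div_of_nonneg_left (by positivity) hδ (hδle j)
    have b2 : ‖q‖^(k*(k+1)/2) / ‖qp q q k‖ ≤ ‖q‖^(k*(k+1)/2) / δ :=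
      div_le_div_of_nonneg_left (by positivity) hδ (hδle k)
    have b3 : ‖R‖^(j*k) ≤ 1 := pow_le_one₀ (norm_nonneg R) hRnorm
    calc ‖q‖^(j*(j+1)/2) / ‖qp q q j‖ * (‖q‖^(k*(k+1)/2) / ‖qp q q k‖) * ‖R‖^(j*k)
        ≤ ‖q‖^(j*(j+1)/2) / ‖qp q q j‖ * (‖q‖^(k*(k+1)/2) / ‖qp q q k‖) * 1 := by
          apply mul_le_mul_of_nonneg_left b3 (by positivity)
      _ = ‖q‖^(j*(j+1)/2) / ‖qp q q j‖ * (‖q‖^(k*(k+1)/2) / ‖qp q q k‖) := mul_one _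
      _ ≤ (‖q‖^(j*(j+1)/2)/δ) * (‖q‖^(k*(k+1)/2)/δ) := by
          apply mul_le_mul b1 b2 (by positivity) (by positivity)
  -- LHS as a double sum
  have hLHS : ∑' j : ℕ, q ^ (j * (j + 1) / 2) / (qp q q j * qpc q q R j)
      = P⁻¹ * ∑' j : ℕ, ∑' k : ℕ, T j k := by
    rw [← tsum_mul_left]
    apply tsum_congr
    intro j
    have hqpc : qpc q q R j = P / qpInf (q * R^j) q := rfl
    rw [hqpc]
    have expand : q ^ (j * (j + 1) / 2) / (qp q q j * (P / qpInf (q * R^j) q))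
        = P⁻¹ * ((q ^ (j * (j + 1) / 2) / qp q q j) * qpInf (q * R^j) q) := by
      rw [← mul_div_assoc, div_div_eq_mul_div]
      ring
    rw [expand]
    congr 1
    rw [eulerA q hq h1 h4 (R^j), ← tsum_mul_left]
    apply tsum_congr
    intro k
    rw [hT]
    simp only []
    rw [← pow_mul]
    ring
  -- RHS as a single sum of products
  have hRHS : (Pm / P) * ∑' k : ℕ, (-1 : ℂ) ^ k * q ^ (k * (k + 1) / 2) /
        (qp q q k * qpc (-q) q R k)
      = P⁻¹ * ∑' k : ℕ, (((-1:ℂ)^k * q^(k*(k+1)/2)) / qp q q k) * qpInf (-(q * R^k)) q := by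
    rw [← tsum_mul_left, ← tsum_mul_left]
    apply tsum_congr
    intro k
    have hqpc : qpc (-q) q R k = Pm / qpInf (-q * R^k) q := rfl
    rw [hqpc]
    have hneg : -q * R^k = -(q * R^k) := by ring
    rw [hneg]
    have h6' : qpInf (-(q * R^k)) q ≠ 0 := by
      rw [← hneg]; exact h6 k
    calc Pm / P * ((-1:ℂ) ^ k * q ^ (k * (k + 1) / 2) /
          (qp q q k * (Pm / qpInf (-(q * R^k)) q)))
        = ((-1:ℂ)^k * q^(k*(k+1)/2)) * qpInf (-(q * R^k)) q * Pm
            / (qp q q k * P * Pm) := by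
            rw [← mul_div_assoc (a := qp q q k) (b := Pm) (c := qpInf (-(q * R^k)) q),
              div_div_eq_mul_div]
            ring
      _ = ((-1:ℂ)^k * q^(k*(k+1)/2)) * qpInf (-(q * R^k)) q / (qp q q k * P) :=
          mul_div_mul_right _ _ hPmne
      _ = P⁻¹ * ((((-1:ℂ)^k * q^(k*(k+1)/2)) / qp q q k) * qpInf (-(q * R^k)) q) := by
          ring
  -- inner sums
  have hinner : ∀ k : ℕ, ∑' j : ℕ, T j k
      = (((-1:ℂ)^k * q^(k*(k+1)/2)) / qp q q k) * qpInf (-(q * R^k)) q := by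
    intro k
    rw [eulerB q hq h1 h4 (R^k), ← tsum_mul_left]
    apply tsum_congr
    intro j
    rw [hT]
    simp only []
    rw [← pow_mul, mul_comm k j]
    ring
  rw [hLHS, hRHS]
  congr 1
  -- swap the double sum
  have hfib1 : ∀ j, Summable (fun k => T j k) := fun j => hTsum.prod_factor j
  have hswap : ∑' j : ℕ, ∑' k : ℕ, T j k = ∑' k : ℕ, ∑' j : ℕ, T j k := by
    rw [← Summable.tsum_prod' hTsum hfib1]
    have hTsum2 : Summable (fun p : ℕ × ℕ => T p.2 p.1) := by
      have := hTsum.prod_symm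
      simpa [Prod.swap] using this
    rw [← Summable.tsum_prod' hTsum2 (fun k => hTsum2.prod_factor k)]
    exact ((Equiv.prodComm ℕ ℕ).tsum_eq _).symm
  rw [hswap]
  exact tsum_congr hinner
end

section
/- A symmetric bibasic transformation (the b = c = 0 case of the generalized Entry 1.4.1): Let q, h, t be complex numbers with |q^h| < 1, |q^t| < 1 and |q^{ht}| < 1 (principal complex powers), and let a, b be complex numbers with |a q^t| < 1 and |b q^h| < 1 such that all denominators below are nonzero. Then [1 / (bq^h;q^h)_∞] · ∑_{j=0}^∞ [(bq^h;q^h)_{tj} / (q^t;q^t)_j] · (aq^t)^j = [1 / (aq^t;q^t)_∞] · ∑_{k=0}^∞ [(aq^t;q^t)_{hk} / (q^h;q^h)_k] · (bq^h)^k. -/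
set_option maxHeartbeats 1000000

open Complex

namespace SymmetricBibasic

open Filter Finset

lemma factor_ne_zero {A Q : ℂ} (hA : ‖A‖ < 1) (hQ : ‖Q‖ < 1) (r : ℕ) :
    1 - A * Q ^ r ≠ 0 := by
  intro hc
  have h1 : A * Q ^ r = 1 := by linear_combination -hc
  have h2 : ‖A * Q ^ r‖ < 1 := by
    rw [norm_mul, norm_pow]
    calc ‖A‖ * ‖Q‖ ^ r ≤ ‖A‖ * 1 := by
          have := pow_le_one₀ (norm_nonneg Q) hQ.le (n := r)
          exact mul_le_mul_of_nonneg_left this (norm_nonneg A)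
      _ < 1 := by simpa using hA
  rw [h1] at h2; simp at h2

lemma summable_log_qp {A Q : ℂ} (hA : ‖A‖ < 1) (hQ : ‖Q‖ < 1) :
    Summable fun r : ℕ => Complex.log (1 - A * Q ^ r) := by
  have hgeo : Summable fun r : ℕ => (3/2 : ℝ) * (‖A‖ * ‖Q‖ ^ r) :=
    ((summable_geometric_of_lt_one (norm_nonneg Q) hQ).mul_left _).mul_left _
  apply Summable.of_norm_bounded_eventually hgeo
  have htend : Tendsto (fun r : ℕ => ‖A‖ * ‖Q‖ ^ r) atTop (nhds 0) := by
    simpa using (tendsto_pow_atTop_nhds_zero_of_lt_one (norm_nonneg Q) hQ).const_mul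
      (‖A‖)
  have hev : ∀ᶠ r : ℕ in atTop, ‖A‖ * ‖Q‖ ^ r ≤ 1/2 := by
    filter_upwards [htend.eventually (eventually_le_nhds (by norm_num : (0:ℝ) < 1/2))] with r hr
      using hr
  rw [Nat.cofinite_eq_atTop]
  filter_upwards [hev] with r hr
  have hz : ‖-(A * Q ^ r)‖ ≤ 1/2 := by
    rw [norm_neg, norm_mul, norm_pow]; exact hr
  have := Complex.norm_log_one_add_half_le_self hz
  have he : (1 : ℂ) + -(A * Q ^ r) = 1 - A * Q ^ r := by ring
  rw [he] at this
  calc ‖Complex.log (1 - A * Q ^ r)‖ ≤ 3/2 * ‖-(A * Q ^ r)‖ := this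
    _ = 3/2 * (‖A‖ * ‖Q‖ ^ r) := by
        rw [norm_neg, norm_mul, norm_pow]

lemma multipliable_qp {A Q : ℂ} (hA : ‖A‖ < 1) (hQ : ‖Q‖ < 1) :
    Multipliable fun r : ℕ => 1 - A * Q ^ r :=
  Complex.multipliable_of_summable_log (summable_log_qp hA hQ)

lemma qpInf_ne_zero {A Q : ℂ} (hA : ‖A‖ < 1) (hQ : ‖Q‖ < 1) :
    qpInf A Q ≠ 0 := by
  have := Complex.cexp_tsum_eq_tprod (f := fun r => 1 - A * Q ^ r)
    (fun r => factor_ne_zero hA hQ r) (summable_log_qp hA hQ)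
  beta_reduce at this
  rw [qpInf, ← this]
  exact Complex.exp_ne_zero _

lemma tendsto_qp {A Q : ℂ} (hA : ‖A‖ < 1) (hQ : ‖Q‖ < 1) :
    Tendsto (fun n => qp A Q n) atTop (nhds (qpInf A Q)) :=
  (multipliable_qp hA hQ).hasProd.tendsto_prod_nat

lemma qp_ne_zero {A Q : ℂ} (hA : ‖A‖ < 1) (hQ : ‖Q‖ < 1) (k : ℕ) :
    qp A Q k ≠ 0 := by
  rw [qp]
  exact Finset.prod_ne_zero_iff.mpr fun r _ => factor_ne_zero hA hQ r

lemma exists_qp_lower {Q : ℂ} (hQ : ‖Q‖ < 1) :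
    ∃ δ : ℝ, 0 < δ ∧ ∀ k : ℕ, δ ≤ ‖qp Q Q k‖ := by
  have hpos : ∀ k, 0 < ‖qp Q Q k‖ := fun k =>
    norm_pos_iff.mpr (qp_ne_zero hQ hQ k)
  have hL : 0 < ‖qpInf Q Q‖ := norm_pos_iff.mpr (qpInf_ne_zero hQ hQ)
  set L := ‖qpInf Q Q‖ with hLdef
  have htend : Tendsto (fun n => ‖qp Q Q n‖) atTop (nhds L) :=
    (continuous_norm.tendsto _).comp (tendsto_qp hQ hQ)
  have hev : ∀ᶠ n in atTop, L / 2 < ‖qp Q Q n‖ :=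
    htend.eventually (eventually_gt_nhds (by linarith))
  obtain ⟨N, hN⟩ := eventually_atTop.mp hev
  have hne : (Finset.range (N + 1)).Nonempty := ⟨0, by simp⟩
  set m := (Finset.range (N + 1)).inf' hne (fun k => ‖qp Q Q k‖) with hm
  have hmpos : 0 < m := by
    rw [hm]
    apply (Finset.lt_inf'_iff hne).mpr
    intro k _; exact hpos k
  refine ⟨min (L / 2) m, lt_min (by linarith) hmpos, fun k => ?_⟩
  rcases le_or_gt k N with hk | hk
  · exact le_trans (min_le_right _ _)
      (Finset.inf'_le _ (Finset.mem_range.mpr (by omega)))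
  · exact le_trans (min_le_left _ _) (hN k (by omega)).le

lemma euler {Q : ℂ} (hQ : ‖Q‖ < 1) {x : ℂ} (hx : ‖x‖ < 1) :
    ∑' k : ℕ, x ^ k / qp Q Q k = 1 / qpInf x Q := by
  obtain ⟨δ, hδ, hqp⟩ := exists_qp_lower hQ
  have hqpne : ∀ k, qp Q Q k ≠ 0 := qp_ne_zero hQ hQ
  have hsum : ∀ y : ℂ, ‖y‖ < 1 → Summable (fun k : ℕ => y ^ k / qp Q Q k) := by
    intro y hy
    apply Summable.of_norm_bounded (g := fun k => δ⁻¹ * ‖y‖ ^ k)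
      ((summable_geometric_of_lt_one (norm_nonneg y) hy).mul_left _)
    intro k
    rw [norm_div, norm_pow]
    calc ‖y‖ ^ k / ‖qp Q Q k‖
        ≤ ‖y‖ ^ k / δ := by
          gcongr
          exact hqp k
      _ = δ⁻¹ * ‖y‖ ^ k := by rw [div_eq_inv_mul]
  set S : ℂ → ℂ := fun y => ∑' k : ℕ, y ^ k / qp Q Q k with hS
  have funeq : ∀ y : ℂ, ‖y‖ < 1 → (1 - y) * S y = S (Q * y) := by
    intro y hy
    have hQy : ‖Q * y‖ < 1 := by
      rw [norm_mul]
      calc ‖Q‖ * ‖y‖ ≤ 1 * ‖y‖ := by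
            gcongr <;> exact hQ.le
        _ < 1 := by simpa using hy
    have h0 : S y = 1 + ∑' k : ℕ, y ^ (k + 1) / qp Q Q (k + 1) := by
      simp only [hS]
      rw [Summable.tsum_eq_zero_add (hsum y hy)]
      all_goals simp [qp]
    have h0' : S (Q * y) = 1 + ∑' k : ℕ, (Q * y) ^ (k + 1) / qp Q Q (k + 1) := by
      simp only [hS]
      rw [Summable.tsum_eq_zero_add (hsum _ hQy)]
      all_goals simp [qp]
    have hterm : ∀ k : ℕ, y ^ (k + 1) / qp Q Q (k + 1) - y * (y ^ k / qp Q Q k)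
        = (Q * y) ^ (k + 1) / qp Q Q (k + 1) := by
      intro k
      have hrec : qp Q Q (k + 1) = qp Q Q k * (1 - Q * Q ^ k) := by
        rw [qp, qp, Finset.prod_range_succ]
      have h1 := hqpne k
      have h2 := factor_ne_zero hQ hQ k
      rw [hrec]
      set P := qp Q Q k with hP
      field_simp
      ring
    have hsum1 : Summable (fun k : ℕ => y ^ (k + 1) / qp Q Q (k + 1)) :=
      (summable_nat_add_iff 1).mpr (hsum y hy)
    have hsum2 : Summable (fun k : ℕ => y * (y ^ k / qp Q Q k)) :=
      (hsum y hy).mul_left y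
    have hmul : y * S y = ∑' k : ℕ, y * (y ^ k / qp Q Q k) := by
      simp only [hS]; rw [tsum_mul_left]
    calc (1 - y) * S y = S y - y * S y := by ring
      _ = (1 + ∑' k : ℕ, y ^ (k + 1) / qp Q Q (k + 1))
          - ∑' k : ℕ, y * (y ^ k / qp Q Q k) := by
            rw [hmul, h0]
      _ = 1 + ∑' k : ℕ, (y ^ (k + 1) / qp Q Q (k + 1) - y * (y ^ k / qp Q Q k)) := by
            rw [Summable.tsum_sub hsum1 hsum2]; ring
      _ = 1 + ∑' k : ℕ, (Q * y) ^ (k + 1) / qp Q Q (k + 1) := by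
            rw [tsum_congr hterm]
      _ = S (Q * y) := h0'.symm
  have iter : ∀ n : ℕ, S x * qp x Q n = S (x * Q ^ n) := by
    intro n
    induction n with
    | zero => simp [qp]
    | succ n ih =>
      have hxn : ‖x * Q ^ n‖ < 1 := by
        rw [norm_mul, norm_pow]
        calc ‖x‖ * ‖Q‖ ^ n ≤ ‖x‖ * 1 := by
              gcongr
              · exact pow_le_one₀ (norm_nonneg Q) hQ.le
          _ < 1 := by simpa using hx
      have : qp x Q (n + 1) = qp x Q n * (1 - x * Q ^ n) := by
        rw [qp, qp, Finset.prod_range_succ]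
      rw [this, ← mul_assoc, ih, mul_comm (S (x * Q ^ n)) _, funeq _ hxn]
      ring_nf
  have key : ∀ y : ℂ, ‖y‖ ≤ ‖x‖ →
      ‖S y - 1‖ ≤ δ⁻¹ * (1 - ‖x‖)⁻¹ * ‖y‖ := by
    intro y hy
    have hy1 : ‖y‖ < 1 := lt_of_le_of_lt hy hx
    have h0 : S y - 1 = ∑' k : ℕ, y ^ (k + 1) / qp Q Q (k + 1) := by
      simp only [hS]
      rw [Summable.tsum_eq_zero_add (hsum y hy1)]
      all_goals simp [qp]
    rw [h0]
    have hmaj : Summable (fun k : ℕ => δ⁻¹ * ‖y‖ * ‖x‖ ^ k) :=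
      (summable_geometric_of_lt_one (norm_nonneg x) hx).mul_left _
    have hbound : ∀ k : ℕ, ‖y ^ (k + 1) / qp Q Q (k + 1)‖
        ≤ δ⁻¹ * ‖y‖ * ‖x‖ ^ k := by
      intro k
      rw [norm_div, norm_pow]
      have h1 : ‖y‖ ^ (k + 1) ≤ ‖y‖ * ‖x‖ ^ k := by
        rw [pow_succ, mul_comm]
        gcongr <;> exact pow_le_pow_left₀ (norm_nonneg y) hy k
      calc ‖y‖ ^ (k + 1) / ‖qp Q Q (k + 1)‖
            ≤ ‖y‖ ^ (k + 1) / δ := by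
              gcongr
              exact hqp _
        _ ≤ (‖y‖ * ‖x‖ ^ k) / δ := by gcongr
        _ = δ⁻¹ * ‖y‖ * ‖x‖ ^ k := by ring
    calc ‖∑' k : ℕ, y ^ (k + 1) / qp Q Q (k + 1)‖
        ≤ ∑' k : ℕ, (δ⁻¹ * ‖y‖ * ‖x‖ ^ k) :=
          tsum_of_norm_bounded hmaj.hasSum hbound
      _ = δ⁻¹ * ‖y‖ * (1 - ‖x‖)⁻¹ := by
          rw [tsum_mul_left, tsum_geometric_of_lt_one (norm_nonneg x) hx]
      _ = δ⁻¹ * (1 - ‖x‖)⁻¹ * ‖y‖ := by ring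
  have htendR : Tendsto (fun n : ℕ => S (x * Q ^ n)) atTop (nhds 1) := by
    rw [← tendsto_sub_nhds_zero_iff]
    apply squeeze_zero_norm (a := fun n : ℕ =>
      δ⁻¹ * (1 - ‖x‖)⁻¹ * (‖x‖ * ‖Q‖ ^ n))
    · intro n
      have : ‖x * Q ^ n‖ ≤ ‖x‖ := by
        rw [norm_mul, norm_pow]
        calc ‖x‖ * ‖Q‖ ^ n ≤ ‖x‖ * 1 := by
              gcongr
              exact pow_le_one₀ (norm_nonneg Q) hQ.le
          _ = ‖x‖ := by ring
      have := key _ this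
      calc ‖S (x * Q ^ n) - 1‖ ≤ δ⁻¹ * (1 - ‖x‖)⁻¹ * ‖x * Q ^ n‖ := this
        _ = δ⁻¹ * (1 - ‖x‖)⁻¹ * (‖x‖ * ‖Q‖ ^ n) := by
            rw [norm_mul, norm_pow]
    · have : Tendsto (fun n : ℕ => ‖Q‖ ^ n) atTop (nhds 0) :=
        tendsto_pow_atTop_nhds_zero_of_lt_one (norm_nonneg Q) hQ
      simpa using ((this.const_mul (‖x‖)).const_mul
        (δ⁻¹ * (1 - ‖x‖)⁻¹))
  have htendL : Tendsto (fun n : ℕ => S x * qp x Q n) atTop (nhds (S x * qpInf x Q)) :=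
    (tendsto_qp hx hQ).const_mul (S x)
  have heq : S x * qpInf x Q = 1 := by
    apply tendsto_nhds_unique _ htendR
    exact htendL.congr (fun n => iter n)
  have hne := qpInf_ne_zero hx hQ
  rw [hS] at heq
  field_simp
  linear_combination heq

lemma abs_mul_pow_lt {y R : ℂ} (hy : ‖y‖ < 1) (hR : ‖R‖ < 1) (j : ℕ) :
    ‖y * R ^ j‖ < 1 := by
  rw [norm_mul, norm_pow]
  calc ‖y‖ * ‖R‖ ^ j ≤ ‖y‖ * 1 := by
        gcongr
        · exact pow_le_one₀ (norm_nonneg R) hR.le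
    _ < 1 := by simpa using hy

lemma side {Qt Qh R x y : ℂ} (hQt : ‖Qt‖ < 1) (hQh : ‖Qh‖ < 1)
    (hR : ‖R‖ < 1) (hy : ‖y‖ < 1) :
    (1 / qpInf y Qh) * ∑' j : ℕ, (qpc y Qh R j / qp Qt Qt j) * x ^ j
    = ∑' j : ℕ, ∑' k : ℕ, x ^ j * y ^ k * R ^ (j * k) / (qp Qt Qt j * qp Qh Qh k) := by
  rw [← tsum_mul_left]
  apply tsum_congr
  intro j
  have hyR : ‖y * R ^ j‖ < 1 := abs_mul_pow_lt hy hR j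
  have hD := qpInf_ne_zero hyR hQh
  have hP := qpInf_ne_zero hy hQh
  have hc := qp_ne_zero hQt hQt j
  calc (1 / qpInf y Qh) * (qpc y Qh R j / qp Qt Qt j * x ^ j)
      = (x ^ j / qp Qt Qt j) * (1 / qpInf (y * R ^ j) Qh) := by
        rw [qpc]; field_simp
    _ = (x ^ j / qp Qt Qt j) * ∑' k : ℕ, (y * R ^ j) ^ k / qp Qh Qh k := by
        rw [euler hQh hyR]
    _ = ∑' k : ℕ, (x ^ j / qp Qt Qt j) * ((y * R ^ j) ^ k / qp Qh Qh k) :=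
        (tsum_mul_left).symm
    _ = ∑' k : ℕ, x ^ j * y ^ k * R ^ (j * k) / (qp Qt Qt j * qp Qh Qh k) := by
        apply tsum_congr
        intro k
        rw [mul_pow, ← pow_mul, div_mul_div_comm]
        ring_nf

lemma summable_F {Qt Qh R x y : ℂ} (hQt : ‖Qt‖ < 1) (hQh : ‖Qh‖ < 1)
    (hR : ‖R‖ < 1) (hx : ‖x‖ < 1) (hy : ‖y‖ < 1) :
    Summable (fun p : ℕ × ℕ =>
      x ^ p.1 * y ^ p.2 * R ^ (p.1 * p.2) / (qp Qt Qt p.1 * qp Qh Qh p.2)) := by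
  obtain ⟨δt, hδt, hqpt⟩ := exists_qp_lower hQt
  obtain ⟨δh, hδh, hqph⟩ := exists_qp_lower hQh
  have hg : Summable (fun p : ℕ × ℕ =>
      (δt⁻¹ * ‖x‖ ^ p.1) * (δh⁻¹ * ‖y‖ ^ p.2)) :=
    Summable.mul_of_nonneg
      ((summable_geometric_of_lt_one (norm_nonneg x) hx).mul_left _)
      ((summable_geometric_of_lt_one (norm_nonneg y) hy).mul_left _)
      (fun j => by positivity) (fun k => by positivity)
  apply Summable.of_norm_bounded hg
  rintro ⟨j, k⟩
  rw [norm_div, norm_mul, norm_mul, norm_mul, norm_pow, norm_pow, norm_pow]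
  have h1 : ‖x‖ ^ j * ‖y‖ ^ k * ‖R‖ ^ (j * k)
      ≤ ‖x‖ ^ j * ‖y‖ ^ k * 1 := by
    gcongr
    · exact pow_le_one₀ (norm_nonneg R) hR.le
  calc ‖x‖ ^ j * ‖y‖ ^ k * ‖R‖ ^ (j * k)
        / (‖qp Qt Qt j‖ * ‖qp Qh Qh k‖)
      ≤ (‖x‖ ^ j * ‖y‖ ^ k * 1) / (δt * δh) := by
        gcongr
        · exact hqpt j
        · exact hqph k
    _ = (δt⁻¹ * ‖x‖ ^ j) * (δh⁻¹ * ‖y‖ ^ k) := by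
        rw [mul_one, div_eq_mul_inv, mul_inv]; ring

lemma main_aux {Qt Qh R x y : ℂ} (hQt : ‖Qt‖ < 1) (hQh : ‖Qh‖ < 1)
    (hR : ‖R‖ < 1) (hx : ‖x‖ < 1) (hy : ‖y‖ < 1) :
    (1 / qpInf y Qh) * ∑' j : ℕ, (qpc y Qh R j / qp Qt Qt j) * x ^ j
    = (1 / qpInf x Qt) * ∑' k : ℕ, (qpc x Qt R k / qp Qh Qh k) * y ^ k := by
  rw [side hQt hQh hR hy, side hQh hQt hR hx]
  have hcomm := Summable.tsum_comm (f := fun j k : ℕ =>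
      x ^ j * y ^ k * R ^ (j * k) / (qp Qt Qt j * qp Qh Qh k))
    (summable_F hQt hQh hR hx hy)
  rw [← hcomm]
  apply tsum_congr; intro k
  apply tsum_congr; intro j
  rw [mul_comm k j]
  ring_nf

end SymmetricBibasic

/-- a symmetric bibasic transformation (`b = c = 0` case of the
generalized Entry 1.4.1). -/
theorem symmetric_bibasic (q h t a b : ℂ)
    (hqh : ‖q ^ h‖ < 1) (hqt : ‖q ^ t‖ < 1)
    (hqht : ‖q ^ (h * t)‖ < 1)
    (haq : ‖a * q ^ t‖ < 1) (hbq : ‖b * q ^ h‖ < 1)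
    (h1 : qpInf (b * q ^ h) (q ^ h) ≠ 0)
    (h2 : qpInf (a * q ^ t) (q ^ t) ≠ 0)
    (h3 : ∀ j : ℕ, qp (q ^ t) (q ^ t) j ≠ 0)
    (h4 : ∀ j : ℕ, qpInf (b * q ^ h * (q ^ (h * t)) ^ j) (q ^ h) ≠ 0)
    (h5 : ∀ k : ℕ, qp (q ^ h) (q ^ h) k ≠ 0)
    (h6 : ∀ k : ℕ, qpInf (a * q ^ t * (q ^ (h * t)) ^ k) (q ^ t) ≠ 0) :
    (1 / qpInf (b * q ^ h) (q ^ h)) *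
      ∑' j : ℕ, (qpc (b * q ^ h) (q ^ h) (q ^ (h * t)) j / qp (q ^ t) (q ^ t) j) *
        (a * q ^ t) ^ j
    = (1 / qpInf (a * q ^ t) (q ^ t)) *
      ∑' k : ℕ, (qpc (a * q ^ t) (q ^ t) (q ^ (h * t)) k / qp (q ^ h) (q ^ h) k) *
        (b * q ^ h) ^ k := by
  exact SymmetricBibasic.main_aux hqt hqh hqht haq hbq
end

section
/- Common generalization of Ramanujan's Entry 1.6.6 and its phi(−q) companion: Let q, t, s be complex numbers with |q| < 1, |q^t| < 1 and |a q^s| < 1 (principal complex powers), and let a be a complex number such that 1 + a·q^s·(q^t)^j ≠ 0 for every nonnegative integer j and such that (−aq^s;q^t)_∞ ≠ 0. Then ∑_{j=0}^∞ (−1)^j (q^t)^{j(j+1)/2} / [(q^t;q^t)_j · (1 + a·q^s·(q^t)^j)] = (q^t;q^t)_∞ / (−aq^s;q^t)_∞. -/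
open Complex

section Aux
open Filter Finset Topology

namespace E166

lemma tri (k : ℕ) : (k + 1) * k / 2 = k * (k - 1) / 2 + k := by
  cases k with
  | zero => rfl
  | succ n =>
    have h1 : (n + 2) * (n + 1) = (n + 1) * n + (n + 1) * 2 := by ring
    simp only [Nat.add_sub_cancel]
    rw [show n + 1 + 1 = n + 2 from rfl, h1,
      Nat.add_mul_div_right _ _ (by norm_num : 0 < 2)]

lemma le_tri (j : ℕ) : j ≤ j * (j + 1) / 2 := by
  rw [Nat.le_div_iff_mul_le (by norm_num : 0 < 2)]
  cases j with
  | zero => simp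
  | succ n => exact Nat.mul_le_mul_left _ (by omega)

lemma one_sub_ne {x : ℂ} (h : ‖x‖ < 1) : 1 - x ≠ 0 := by
  intro hx
  rw [sub_eq_zero] at hx
  rw [← hx, norm_one] at h
  exact lt_irrefl 1 h

lemma qp_zero (A Q : ℂ) : qp A Q 0 = 1 := Finset.prod_range_zero _

lemma qp_succ (A Q : ℂ) (k : ℕ) : qp A Q (k + 1) = qp A Q k * (1 - A * Q ^ k) :=
  Finset.prod_range_succ _ _

variable {Q : ℂ}

lemma summable_log (hQ : ‖Q‖ < 1) (A : ℂ) :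
    Summable (fun r : ℕ => Complex.log (1 - A * Q ^ r)) := by
  have hgeo : Summable (fun r : ℕ => 3 / 2 * ‖A‖ * ‖Q‖ ^ r) :=
    (summable_geometric_of_lt_one (norm_nonneg Q) hQ).mul_left _
  apply Summable.of_norm_bounded_eventually hgeo
  rw [Nat.cofinite_eq_atTop]
  have h0 : Tendsto (fun r : ℕ => ‖A‖ * ‖Q‖ ^ r) atTop (𝓝 0) := by
    simpa using (tendsto_pow_atTop_nhds_zero_of_lt_one (norm_nonneg Q) hQ).const_mul ‖A‖
  filter_upwards [h0.eventually (gt_mem_nhds (show (0:ℝ) < 1/2 by norm_num))] with r hr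
  have hx : ‖-(A * Q ^ r)‖ ≤ 1 / 2 := by
    rw [norm_neg, norm_mul, norm_pow]; exact hr.le
  have hb := Complex.norm_log_one_add_half_le_self hx
  rw [show (1 : ℂ) + -(A * Q ^ r) = 1 - A * Q ^ r by ring] at hb
  rw [norm_neg, norm_mul, norm_pow] at hb
  calc ‖Complex.log (1 - A * Q ^ r)‖ ≤ 3 / 2 * (‖A‖ * ‖Q‖ ^ r) := hb
    _ = 3 / 2 * ‖A‖ * ‖Q‖ ^ r := by ring

lemma hasProd_ne (hQ : ‖Q‖ < 1) (A : ℂ) (hne : ∀ r : ℕ, 1 - A * Q ^ r ≠ 0) :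
    HasProd (fun r : ℕ => 1 - A * Q ^ r) (qpInf A Q) ∧ qpInf A Q ≠ 0 := by
  have hmul : Multipliable (fun r : ℕ => 1 - A * Q ^ r) :=
    Complex.multipliable_of_summable_log (summable_log hQ A)
  have hexp : cexp (∑' r : ℕ, Complex.log (1 - A * Q ^ r)) = ∏' r : ℕ, (1 - A * Q ^ r) :=
    Complex.cexp_tsum_eq_tprod hne (summable_log hQ A)
  refine ⟨hmul.hasProd, ?_⟩
  rw [qpInf, ← hexp]
  exact Complex.exp_ne_zero _

lemma hQfac (hQ : ‖Q‖ < 1) (r : ℕ) : ‖Q * Q ^ r‖ < 1 := by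
  rw [norm_mul, norm_pow]
  calc ‖Q‖ * ‖Q‖ ^ r ≤ ‖Q‖ * 1 :=
        mul_le_mul_of_nonneg_left (pow_le_one₀ (norm_nonneg _) hQ.le) (norm_nonneg _)
    _ = ‖Q‖ := mul_one _
    _ < 1 := hQ

lemma hqp_ne (hQ : ‖Q‖ < 1) (j : ℕ) : qp Q Q j ≠ 0 :=
  Finset.prod_ne_zero_iff.2 fun r _ => one_sub_ne (hQfac hQ r)

lemma qp_lower (hQ : ‖Q‖ < 1) : ∃ c : ℝ, 0 < c ∧ ∀ j, c ≤ ‖qp Q Q j‖ := by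
  obtain ⟨hp, hne⟩ := hasProd_ne hQ Q (fun r => one_sub_ne (hQfac hQ r))
  have hL : 0 < ‖qpInf Q Q‖ := norm_pos_iff.2 hne
  have ht : Tendsto (fun n => ‖qp Q Q n‖) atTop (𝓝 ‖qpInf Q Q‖) := by
    have := hp.tendsto_prod_nat
    exact (this.norm).congr fun n => by rw [qp]
  have hev : ∀ᶠ n in atTop, ‖qpInf Q Q‖ / 2 < ‖qp Q Q n‖ :=
    ht.eventually (lt_mem_nhds (by linarith))
  obtain ⟨N, hN⟩ := eventually_atTop.1 hev
  have hne' : (Finset.range (N + 1)).Nonempty := ⟨0, by simp⟩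
  set c₁ := (Finset.range (N + 1)).inf' hne' (fun j => ‖qp Q Q j‖) with hc₁
  have hc₁pos : 0 < c₁ := by
    rw [hc₁, Finset.lt_inf'_iff]
    exact fun j _ => norm_pos_iff.2 (hqp_ne hQ j)
  refine ⟨min c₁ (‖qpInf Q Q‖ / 2), lt_min hc₁pos (by linarith), fun j => ?_⟩
  rcases le_or_gt j N with h | h
  · exact le_trans (min_le_left _ _)
      (Finset.inf'_le _ (Finset.mem_range.2 (Nat.lt_succ_of_le h)))
  · exact le_trans (min_le_right _ _) (hN j h.le).le


section Euler
variable {c : ℝ}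

lemma summable_f (hc : 0 < c) (hcle : ∀ j, c ≤ ‖qp Q Q j‖) {w : ℂ} (hw : ‖w‖ < 1) : Summable (fun m : ℕ => w ^ m / qp Q Q m) := by
  apply Summable.of_norm_bounded (g := fun m => ‖w‖ ^ m / c)
    ((summable_geometric_of_lt_one (norm_nonneg w) hw).div_const c)
  intro m
  rw [norm_div, norm_pow]
  exact div_le_div₀ (pow_nonneg (norm_nonneg w) m) le_rfl hc (hcle m)

lemma norm_mul_left_lt (hQ : ‖Q‖ < 1) {w : ℂ} (hw : ‖w‖ < 1) : ‖Q * w‖ < 1 :=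
  lt_of_le_of_lt (by rw [norm_mul]; exact mul_le_of_le_one_left (norm_nonneg w) hQ.le) hw

lemma norm_pow_mul_le (hQ : ‖Q‖ < 1) (n : ℕ) (w : ℂ) : ‖Q ^ n * w‖ ≤ ‖w‖ := by
  rw [norm_mul, norm_pow]
  exact mul_le_of_le_one_left (norm_nonneg w) (pow_le_one₀ (norm_nonneg Q) hQ.le)

set_option maxHeartbeats 1000000 in
lemma step1 (hQ : ‖Q‖ < 1) (hc : 0 < c) (hcle : ∀ j, c ≤ ‖qp Q Q j‖) {w : ℂ} (hw : ‖w‖ < 1) :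
    (1 - w) * ∑' m : ℕ, w ^ m / qp Q Q m = ∑' m : ℕ, (Q * w) ^ m / qp Q Q m := by
  have hQw : ‖Q * w‖ < 1 := norm_mul_left_lt hQ hw
  have hs := summable_f hc hcle hw
  have hs' := summable_f hc hcle hQw
  have hs1 : Summable (fun k : ℕ => w ^ (k + 1) / qp Q Q (k + 1)) :=
    (summable_nat_add_iff 1).2 hs
  have hs2 : Summable (fun k : ℕ => w ^ (k + 1) / qp Q Q k) :=
    (hs.mul_left w).congr fun k => by rw [pow_succ]; ring
  have key : ∀ k : ℕ, w ^ (k + 1) / qp Q Q (k + 1) - w ^ (k + 1) / qp Q Q k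
      = (Q * w) ^ (k + 1) / qp Q Q (k + 1) := by
    intro k
    rw [qp_succ]
    have h1 : qp Q Q k ≠ 0 := hqp_ne hQ k
    have h2 : (1 : ℂ) - Q * Q ^ k ≠ 0 := one_sub_ne (hQfac hQ k)
    field_simp
    ring
  have f0 : ∑' m : ℕ, w ^ m / qp Q Q m = 1 + ∑' k : ℕ, w ^ (k + 1) / qp Q Q (k + 1) := by
    rw [Summable.tsum_eq_zero_add hs]; norm_num [qp_zero]
  have f0' : ∑' m : ℕ, (Q * w) ^ m / qp Q Q m
      = 1 + ∑' k : ℕ, (Q * w) ^ (k + 1) / qp Q Q (k + 1) := by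
    rw [Summable.tsum_eq_zero_add hs']; norm_num [qp_zero]
  have e1 : ∑' k : ℕ, (Q * w) ^ (k + 1) / qp Q Q (k + 1)
      = (∑' k : ℕ, w ^ (k + 1) / qp Q Q (k + 1)) - ∑' k : ℕ, w ^ (k + 1) / qp Q Q k := by
    rw [← Summable.tsum_sub hs1 hs2]
    exact tsum_congr fun k => (key k).symm
  have e2 : ∑' k : ℕ, w ^ (k + 1) / qp Q Q k
      = w * (1 + ∑' k : ℕ, w ^ (k + 1) / qp Q Q (k + 1)) := by
    rw [← f0, ← tsum_mul_left]
    exact tsum_congr fun k => by rw [pow_succ]; ring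
  rw [f0, f0', e1, e2]
  ring

lemma iter1 (hQ : ‖Q‖ < 1) (hc : 0 < c) (hcle : ∀ j, c ≤ ‖qp Q Q j‖) {w : ℂ} (hw : ‖w‖ < 1) (n : ℕ) :
    qp w Q n * ∑' m : ℕ, w ^ m / qp Q Q m = ∑' m : ℕ, (Q ^ n * w) ^ m / qp Q Q m := by
  induction n with
  | zero => simp [qp_zero]
  | succ n ih =>
    have hn : ‖Q ^ n * w‖ < 1 := lt_of_le_of_lt (norm_pow_mul_le hQ n w) hw
    have hstep := step1 hQ hc hcle hn
    rw [qp_succ]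
    calc qp w Q n * (1 - w * Q ^ n) * ∑' m : ℕ, w ^ m / qp Q Q m
        = (1 - w * Q ^ n) * (qp w Q n * ∑' m : ℕ, w ^ m / qp Q Q m) := by ring
      _ = (1 - w * Q ^ n) * ∑' m : ℕ, (Q ^ n * w) ^ m / qp Q Q m := by rw [ih]
      _ = (1 - Q ^ n * w) * ∑' m : ℕ, (Q ^ n * w) ^ m / qp Q Q m := by ring_nf
      _ = ∑' m : ℕ, (Q * (Q ^ n * w)) ^ m / qp Q Q m := hstep
      _ = ∑' m : ℕ, (Q ^ (n + 1) * w) ^ m / qp Q Q m := by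
          apply tsum_congr; intro m; congr 1; ring

lemma limit_f (hQ : ‖Q‖ < 1) (hc : 0 < c) (hcle : ∀ j, c ≤ ‖qp Q Q j‖) {w : ℂ} (hw : ‖w‖ < 1) :
    Tendsto (fun n : ℕ => ∑' m : ℕ, (Q ^ n * w) ^ m / qp Q Q m) atTop (𝓝 1) := by
  have hbound : Summable (fun m : ℕ => ‖w‖ ^ m / c) :=
    (summable_geometric_of_lt_one (norm_nonneg w) hw).div_const c
  have h := tendsto_tsum_of_dominated_convergence (𝓕 := atTop)
    (f := fun n m => (Q ^ n * w) ^ m / qp Q Q m)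
    (g := fun m => if m = 0 then 1 else 0) (bound := fun m => ‖w‖ ^ m / c)
    hbound ?_ ?_
  · have : (∑' m : ℕ, if m = 0 then (1 : ℂ) else 0) = 1 := tsum_ite_eq 0 1
    rwa [this] at h
  · intro m
    cases m with
    | zero => simpa [qp_zero] using tendsto_const_nhds
    | succ k =>
      simp only [Nat.succ_ne_zero, if_false]
      have h0 : Tendsto (fun n : ℕ => Q ^ n * w) atTop (𝓝 0) := by
        simpa using (tendsto_pow_atTop_nhds_zero_of_norm_lt_one hQ).mul_const w
      have h1 : Tendsto (fun n : ℕ => (Q ^ n * w) ^ (k + 1)) atTop (𝓝 0) := by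
        simpa using h0.pow (k + 1)
      simpa using h1.div_const (qp Q Q (k + 1))
  · filter_upwards with n m
    rw [norm_div, norm_pow]
    exact div_le_div₀ (pow_nonneg (norm_nonneg w) m)
      (pow_le_pow_left₀ (norm_nonneg _) (norm_pow_mul_le hQ n w) m) hc (hcle m)

lemma euler1 (hQ : ‖Q‖ < 1) (hc : 0 < c) (hcle : ∀ j, c ≤ ‖qp Q Q j‖) {z : ℂ} (hz : ‖z‖ < 1) (hne : ∀ r : ℕ, 1 - z * Q ^ r ≠ 0) :
    qpInf z Q * ∑' m : ℕ, z ^ m / qp Q Q m = 1 := by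
  obtain ⟨hp, -⟩ := hasProd_ne hQ z hne
  have h1 : Tendsto (fun n : ℕ => qp z Q n * ∑' m : ℕ, z ^ m / qp Q Q m) atTop
      (𝓝 (qpInf z Q * ∑' m : ℕ, z ^ m / qp Q Q m)) := by
    apply Tendsto.mul_const
    exact hp.tendsto_prod_nat.congr fun n => by rw [qp]
  have h2 : (fun n : ℕ => qp z Q n * ∑' m : ℕ, z ^ m / qp Q Q m)
      = fun n : ℕ => ∑' m : ℕ, (Q ^ n * z) ^ m / qp Q Q m :=
    funext (iter1 hQ hc hcle hz)
  rw [h2] at h1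
  exact tendsto_nhds_unique h1 (limit_f hQ hc hcle hz)

lemma summable_E (hc : 0 < c) (hcle : ∀ j, c ≤ ‖qp Q Q j‖) (hQ1 : ‖Q‖ ≤ 1) {w : ℂ}
    (hw : ‖w‖ < 1) :
    Summable (fun j : ℕ => (-1 : ℂ) ^ j * Q ^ (j * (j - 1) / 2) * w ^ j / qp Q Q j) := by
  apply Summable.of_norm_bounded (g := fun j => ‖w‖ ^ j / c)
    ((summable_geometric_of_lt_one (norm_nonneg w) hw).div_const c)
  intro j
  rw [norm_div, norm_mul, norm_mul, norm_pow, norm_pow, norm_pow, norm_neg, norm_one, one_pow,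
    one_mul]
  apply div_le_div₀ (pow_nonneg (norm_nonneg w) j) _ hc (hcle j)
  exact mul_le_of_le_one_left (pow_nonneg (norm_nonneg w) j)
    (pow_le_one₀ (norm_nonneg Q) hQ1)

set_option maxHeartbeats 1000000 in
lemma step2 (hQ : ‖Q‖ < 1) (hc : 0 < c) (hcle : ∀ j, c ≤ ‖qp Q Q j‖) {w : ℂ}
    (hw : ‖w‖ < 1) :
    ∑' j : ℕ, (-1 : ℂ) ^ j * Q ^ (j * (j - 1) / 2) * w ^ j / qp Q Q j
      = (1 - w) * ∑' j : ℕ, (-1 : ℂ) ^ j * Q ^ (j * (j - 1) / 2) * (Q * w) ^ j / qp Q Q j := by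
  have hQw : ‖Q * w‖ < 1 := norm_mul_left_lt hQ hw
  have hs := summable_E hc hcle hQ.le hw
  have hs' := summable_E hc hcle hQ.le hQw
  have hs1 : Summable (fun k : ℕ =>
      (-1 : ℂ) ^ (k + 1) * Q ^ ((k + 1) * (k + 1 - 1) / 2) * (Q * w) ^ (k + 1)
        / qp Q Q (k + 1)) := (summable_nat_add_iff 1).2 hs'
  have hs2 : Summable (fun k : ℕ =>
      w * ((-1 : ℂ) ^ k * Q ^ (k * (k - 1) / 2) * (Q * w) ^ k / qp Q Q k)) := hs'.mul_left w
  have key : ∀ k : ℕ,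
      (-1 : ℂ) ^ (k + 1) * Q ^ ((k + 1) * (k + 1 - 1) / 2) * w ^ (k + 1) / qp Q Q (k + 1)
        = (-1 : ℂ) ^ (k + 1) * Q ^ ((k + 1) * (k + 1 - 1) / 2) * (Q * w) ^ (k + 1)
            / qp Q Q (k + 1)
          - w * ((-1 : ℂ) ^ k * Q ^ (k * (k - 1) / 2) * (Q * w) ^ k / qp Q Q k) := by
    intro k
    have h1 : qp Q Q k ≠ 0 := hqp_ne hQ k
    have h2 : (1 : ℂ) - Q * Q ^ k ≠ 0 := one_sub_ne (hQfac hQ k)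
    rw [show (k + 1) * (k + 1 - 1) / 2 = k * (k - 1) / 2 + k by
      simpa using tri k, pow_add, qp_succ]
    field_simp
    ring
  have f0 : ∑' j : ℕ, (-1 : ℂ) ^ j * Q ^ (j * (j - 1) / 2) * w ^ j / qp Q Q j
      = 1 + ∑' k : ℕ, (-1 : ℂ) ^ (k + 1) * Q ^ ((k + 1) * (k + 1 - 1) / 2) * w ^ (k + 1)
          / qp Q Q (k + 1) := by
    rw [Summable.tsum_eq_zero_add hs]; norm_num [qp_zero]
  have f0' : ∑' j : ℕ, (-1 : ℂ) ^ j * Q ^ (j * (j - 1) / 2) * (Q * w) ^ j / qp Q Q j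
      = 1 + ∑' k : ℕ, (-1 : ℂ) ^ (k + 1) * Q ^ ((k + 1) * (k + 1 - 1) / 2) * (Q * w) ^ (k + 1)
          / qp Q Q (k + 1) := by
    rw [Summable.tsum_eq_zero_add hs']; norm_num [qp_zero]
  have e1 : ∑' k : ℕ, (-1 : ℂ) ^ (k + 1) * Q ^ ((k + 1) * (k + 1 - 1) / 2) * w ^ (k + 1)
        / qp Q Q (k + 1)
      = (∑' k : ℕ, (-1 : ℂ) ^ (k + 1) * Q ^ ((k + 1) * (k + 1 - 1) / 2) * (Q * w) ^ (k + 1)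
          / qp Q Q (k + 1))
        - ∑' k : ℕ, w * ((-1 : ℂ) ^ k * Q ^ (k * (k - 1) / 2) * (Q * w) ^ k / qp Q Q k) := by
    rw [← Summable.tsum_sub hs1 hs2]
    exact tsum_congr fun k => key k
  have e2 : ∑' k : ℕ, w * ((-1 : ℂ) ^ k * Q ^ (k * (k - 1) / 2) * (Q * w) ^ k / qp Q Q k)
      = w * (1 + ∑' k : ℕ, (-1 : ℂ) ^ (k + 1) * Q ^ ((k + 1) * (k + 1 - 1) / 2)
          * (Q * w) ^ (k + 1) / qp Q Q (k + 1)) := by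
    rw [← f0', tsum_mul_left]
  rw [f0, f0', e1, e2]
  ring

lemma iter2 (hQ : ‖Q‖ < 1) (hc : 0 < c) (hcle : ∀ j, c ≤ ‖qp Q Q j‖) {y : ℂ}
    (hy : ‖y‖ < 1) (n : ℕ) :
    ∑' j : ℕ, (-1 : ℂ) ^ j * Q ^ (j * (j - 1) / 2) * y ^ j / qp Q Q j
      = qp y Q n * ∑' j : ℕ, (-1 : ℂ) ^ j * Q ^ (j * (j - 1) / 2) * (Q ^ n * y) ^ j
          / qp Q Q j := by
  induction n with
  | zero => simp [qp_zero]
  | succ n ih =>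
    have hn : ‖Q ^ n * y‖ < 1 := lt_of_le_of_lt (norm_pow_mul_le hQ n y) hy
    have hstep := step2 hQ hc hcle hn
    rw [qp_succ, ih, hstep]
    have : ∑' j : ℕ, (-1 : ℂ) ^ j * Q ^ (j * (j - 1) / 2) * (Q * (Q ^ n * y)) ^ j / qp Q Q j
        = ∑' j : ℕ, (-1 : ℂ) ^ j * Q ^ (j * (j - 1) / 2) * (Q ^ (n + 1) * y) ^ j / qp Q Q j := by
      apply tsum_congr; intro j; congr 2; ring
    rw [this]
    ring

lemma limit_E (hQ : ‖Q‖ < 1) (hc : 0 < c) (hcle : ∀ j, c ≤ ‖qp Q Q j‖) {y : ℂ}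
    (hy : ‖y‖ < 1) :
    Tendsto (fun n : ℕ => ∑' j : ℕ, (-1 : ℂ) ^ j * Q ^ (j * (j - 1) / 2) * (Q ^ n * y) ^ j
      / qp Q Q j) atTop (𝓝 1) := by
  have hbound : Summable (fun j : ℕ => ‖y‖ ^ j / c) :=
    (summable_geometric_of_lt_one (norm_nonneg y) hy).div_const c
  have h := tendsto_tsum_of_dominated_convergence (𝓕 := atTop)
    (f := fun n j => (-1 : ℂ) ^ j * Q ^ (j * (j - 1) / 2) * (Q ^ n * y) ^ j / qp Q Q j)
    (g := fun j => if j = 0 then 1 else 0) (bound := fun j => ‖y‖ ^ j / c)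
    hbound ?_ ?_
  · have : (∑' j : ℕ, if j = 0 then (1 : ℂ) else 0) = 1 := tsum_ite_eq 0 1
    rwa [this] at h
  · intro j
    cases j with
    | zero => simpa [qp_zero] using tendsto_const_nhds
    | succ k =>
      simp only [Nat.succ_ne_zero, if_false]
      have h0 : Tendsto (fun n : ℕ => Q ^ n * y) atTop (𝓝 0) := by
        simpa using (tendsto_pow_atTop_nhds_zero_of_norm_lt_one hQ).mul_const y
      have h1 : Tendsto (fun n : ℕ => (Q ^ n * y) ^ (k + 1)) atTop (𝓝 0) := by
        simpa using h0.pow (k + 1)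
      have h2 : Tendsto (fun n : ℕ =>
          (-1 : ℂ) ^ (k + 1) * Q ^ ((k + 1) * (k + 1 - 1) / 2) * (Q ^ n * y) ^ (k + 1)
            / qp Q Q (k + 1)) atTop (𝓝 0) := by
        simpa using ((h1.const_mul ((-1 : ℂ) ^ (k + 1) * Q ^ ((k + 1) * (k + 1 - 1) / 2))).div_const
          (qp Q Q (k + 1)))
      exact h2
  · filter_upwards with n j
    rw [norm_div, norm_mul, norm_mul, norm_pow, norm_pow, norm_pow, norm_neg, norm_one, one_pow,
      one_mul]
    apply div_le_div₀ (pow_nonneg (norm_nonneg y) j) _ hc (hcle j)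
    calc ‖Q‖ ^ (j * (j - 1) / 2) * ‖Q ^ n * y‖ ^ j
        ≤ 1 * ‖y‖ ^ j := by
          apply mul_le_mul (pow_le_one₀ (norm_nonneg Q) hQ.le)
            (pow_le_pow_left₀ (norm_nonneg _) (norm_pow_mul_le hQ n y) j)
            (pow_nonneg (norm_nonneg _) j) zero_le_one
      _ = ‖y‖ ^ j := one_mul _

lemma euler2 (hQ : ‖Q‖ < 1) (hc : 0 < c) (hcle : ∀ j, c ≤ ‖qp Q Q j‖) {y : ℂ}
    (hy : ‖y‖ < 1) (hne : ∀ r : ℕ, 1 - y * Q ^ r ≠ 0) :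
    ∑' j : ℕ, (-1 : ℂ) ^ j * Q ^ (j * (j - 1) / 2) * y ^ j / qp Q Q j = qpInf y Q := by
  obtain ⟨hp, -⟩ := hasProd_ne hQ y hne
  have h1 : Tendsto (fun n : ℕ => qp y Q n * ∑' j : ℕ,
      (-1 : ℂ) ^ j * Q ^ (j * (j - 1) / 2) * (Q ^ n * y) ^ j / qp Q Q j) atTop
      (𝓝 (qpInf y Q * 1)) := by
    apply Tendsto.mul
    · exact hp.tendsto_prod_nat.congr fun n => by rw [qp]
    · exact limit_E hQ hc hcle hy
  have h2 : Tendsto (fun n : ℕ => qp y Q n * ∑' j : ℕ,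
      (-1 : ℂ) ^ j * Q ^ (j * (j - 1) / 2) * (Q ^ n * y) ^ j / qp Q Q j) atTop
      (𝓝 (∑' j : ℕ, (-1 : ℂ) ^ j * Q ^ (j * (j - 1) / 2) * y ^ j / qp Q Q j)) :=
    tendsto_const_nhds.congr fun n => iter2 hQ hc hcle hy n
  rw [tendsto_nhds_unique h2 h1, mul_one]

lemma hQfac2 (hQ : ‖Q‖ < 1) (m r : ℕ) : ‖Q ^ (m + 1) * Q ^ r‖ < 1 := by
  rw [norm_mul, norm_pow, norm_pow, ← pow_add]
  exact lt_of_le_of_lt (pow_le_of_le_one (norm_nonneg _) hQ.le (by omega)) hQ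

lemma qpInf_split (hQ : ‖Q‖ < 1) (m : ℕ) :
    qpInf Q Q = qp Q Q m * qpInf (Q ^ (m + 1)) Q := by
  have h1 : Multipliable (fun r : ℕ => 1 - Q ^ (m + 1) * Q ^ r) :=
    (hasProd_ne hQ (Q ^ (m + 1)) (fun r => one_sub_ne (hQfac2 hQ m r))).1.multipliable
  have hshift : Multipliable (fun n : ℕ => 1 - Q * Q ^ (n + m)) := by
    rw [show (fun n : ℕ => 1 - Q * Q ^ (n + m)) = fun n : ℕ => 1 - Q ^ (m + 1) * Q ^ n from
      funext fun n => by ring]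
    exact h1
  have h := Multipliable.prod_mul_tprod_nat_mul' (f := fun r : ℕ => 1 - Q * Q ^ r) (k := m) hshift
  rw [qpInf, qpInf, qp]
  have h2 : ∏' (r : ℕ), (1 - Q ^ (m + 1) * Q ^ r) = ∏' (r : ℕ), (1 - Q * Q ^ (r + m)) :=
    tprod_congr fun r => by rw [show Q ^ (m + 1) * Q ^ r = Q * Q ^ (r + m) by ring]
  rw [h2]
  exact h.symm

end Euler
end E166

noncomputable def E166.Fm (Q z : ℂ) : ℕ × ℕ → ℂ := fun p =>
  (-1 : ℂ) ^ p.1 * Q ^ (p.1 * (p.1 + 1) / 2) * z ^ p.2 * (Q ^ p.1) ^ p.2 / qp Q Q p.1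

end Aux

open Filter Finset Topology E166 in
set_option maxHeartbeats 1600000 in
/-- common generalization of Ramanujan's Entry 1.6.6 and its
`φ(−q)` companion. -/
theorem entry_1_6_6_general (q t s a : ℂ)
    (hq : ‖q‖ < 1) (hqt : ‖q ^ t‖ < 1)
    (haqs : ‖a * q ^ s‖ < 1)
    (h1 : ∀ j : ℕ, (1 + a * q ^ s * (q ^ t) ^ j) ≠ 0)
    (h2 : qpInf (-a * q ^ s) (q ^ t) ≠ 0) :
    ∑' j : ℕ, (-1 : ℂ) ^ j * (q ^ t) ^ (j * (j + 1) / 2) /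
        (qp (q ^ t) (q ^ t) j * (1 + a * q ^ s * (q ^ t) ^ j))
    = qpInf (q ^ t) (q ^ t) / qpInf (-a * q ^ s) (q ^ t) := by
  set Q : ℂ := q ^ t with hQdef
  set z : ℂ := -(a * q ^ s) with hzdef
  have hzz : -a * q ^ s = z := by rw [hzdef]; ring
  rw [hzz]
  have hQ : ‖Q‖ < 1 := by exact hqt
  have hz : ‖z‖ < 1 := by rw [hzdef, norm_neg]; exact haqs
  obtain ⟨c, hc, hcle⟩ := qp_lower hQ
  have hz_ne : ∀ r : ℕ, 1 - z * Q ^ r ≠ 0 := fun r => by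
    have h := h1 r
    rw [show (1 : ℂ) + a * q ^ s * Q ^ r = 1 - z * Q ^ r from by rw [hzdef]; ring] at h
    exact h
  have h2' : qpInf z Q ≠ 0 := by rw [← hzz]; exact h2
  have hzQ : ∀ j : ℕ, ‖z * Q ^ j‖ < 1 := fun j => by
    rw [mul_comm]; exact lt_of_le_of_lt (norm_pow_mul_le hQ j z) hz
  have hterm : ∀ j : ℕ, (-1 : ℂ) ^ j * Q ^ (j * (j + 1) / 2) /
      (qp Q Q j * (1 + a * q ^ s * Q ^ j)) = ∑' m : ℕ, Fm Q z (j, m) := by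
    intro j
    rw [show (1 : ℂ) + a * q ^ s * Q ^ j = 1 - z * Q ^ j from by rw [hzdef]; ring]
    rw [← div_div, div_eq_mul_inv, ← tsum_geometric_of_norm_lt_one (hzQ j), ← tsum_mul_left]
    exact tsum_congr fun m => by simp only [Fm]; rw [mul_pow]; ring
  have hFsum : Summable (Fm Q z) := by
    have hb : Summable (fun p : ℕ × ℕ => ‖Q‖ ^ p.1 * ‖z‖ ^ p.2 / c) :=
      (Summable.mul_of_nonneg (summable_geometric_of_lt_one (norm_nonneg Q) hQ)
        (summable_geometric_of_lt_one (norm_nonneg z) hz)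
        (fun j => pow_nonneg (norm_nonneg Q) j)
        (fun m => pow_nonneg (norm_nonneg z) m)).div_const c
    apply Summable.of_norm_bounded hb
    rintro ⟨j, m⟩
    have h_e : ‖Q‖ ^ (j * (j + 1) / 2) ≤ ‖Q‖ ^ j :=
      pow_le_pow_of_le_one (norm_nonneg _) hQ.le (le_tri j)
    have h_le1 : (‖Q‖ ^ j) ^ m ≤ 1 :=
      pow_le_one₀ (pow_nonneg (norm_nonneg Q) j) (pow_le_one₀ (norm_nonneg Q) hQ.le)
    calc ‖Fm Q z (j, m)‖
        = ‖Q‖ ^ (j * (j + 1) / 2) * ‖z‖ ^ m * (‖Q‖ ^ j) ^ m / ‖qp Q Q j‖ := by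
          simp only [Fm]
          rw [norm_div, norm_mul, norm_mul, norm_mul, norm_pow, norm_pow, norm_pow, norm_pow,
            norm_pow, norm_neg, norm_one, one_pow, one_mul]
      _ ≤ ‖Q‖ ^ j * ‖z‖ ^ m * 1 / c := by
          apply div_le_div₀ (by positivity) _ hc (hcle j)
          exact mul_le_mul
            (mul_le_mul h_e le_rfl (pow_nonneg (norm_nonneg z) m) (pow_nonneg (norm_nonneg Q) j))
            h_le1 (pow_nonneg (pow_nonneg (norm_nonneg Q) j) m) (by positivity)
      _ = ‖Q‖ ^ j * ‖z‖ ^ m / c := by rw [mul_one]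
  have hinner : ∀ m : ℕ, ∑' j : ℕ, Fm Q z (j, m) = z ^ m * (qpInf Q Q / qp Q Q m) := by
    intro m
    have hy : ‖Q ^ (m + 1)‖ < 1 := by
      rw [norm_pow]
      exact lt_of_le_of_lt (pow_le_of_le_one (norm_nonneg _) hQ.le (by omega)) hQ
    have hyne : ∀ r : ℕ, 1 - Q ^ (m + 1) * Q ^ r ≠ 0 := fun r => one_sub_ne (hQfac2 hQ m r)
    have he2 := euler2 hQ hc hcle hy hyne
    have e3 : ∀ j : ℕ, Fm Q z (j, m)
        = z ^ m * ((-1 : ℂ) ^ j * Q ^ (j * (j - 1) / 2) * (Q ^ (m + 1)) ^ j / qp Q Q j) := by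
      intro j
      simp only [Fm]
      rw [show j * (j + 1) / 2 = j * (j - 1) / 2 + j from by rw [mul_comm]; exact tri j, pow_add]
      ring
    rw [tsum_congr e3, tsum_mul_left, he2, qpInf_split hQ m,
      mul_div_cancel_left₀ _ (hqp_ne hQ m)]
  calc ∑' j : ℕ, (-1 : ℂ) ^ j * Q ^ (j * (j + 1) / 2) /
        (qp Q Q j * (1 + a * q ^ s * Q ^ j))
      = ∑' j : ℕ, ∑' m : ℕ, Fm Q z (j, m) := tsum_congr hterm
    _ = ∑' m : ℕ, ∑' j : ℕ, Fm Q z (j, m) := by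
        have hFsum' : Summable (Function.uncurry fun j m => Fm Q z (j, m)) := hFsum
        exact (Summable.tsum_comm hFsum').symm
    _ = ∑' m : ℕ, z ^ m * (qpInf Q Q / qp Q Q m) := tsum_congr hinner
    _ = qpInf Q Q * ∑' m : ℕ, z ^ m / qp Q Q m := by
        rw [← tsum_mul_left]; exact tsum_congr fun m => by ring
    _ = qpInf Q Q * (qpInf z Q)⁻¹ := by
        rw [show (∑' m : ℕ, z ^ m / qp Q Q m) = (qpInf z Q)⁻¹ from
          eq_inv_of_mul_eq_one_left (by rw [mul_comm]; exact euler1 hQ hc hcle hz hz_ne)]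
    _ = qpInf Q Q / qpInf z Q := (div_eq_mul_inv _ _).symm
end
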